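/- Fix χ ∈ C^∞(ℝ) with χ(u) = 0 for u ≤ 1 and χ(u) = 1 for u ≥ 2, and for s > 0 and r > 0 define T_{s,r} : C^∞_0(B̄_r) → C^∞_0(B̄_r) by (T_{s,r} f)(x) := χ(s·|x|/r) · f(x). Then for all n, k, j ∈ ℕ there exist constants C = C(n,k,j,r) > 0, depending continuously on r, such that for all f ∈ C^∞_0(B̄_r) and all s > 0: ⟨T_{s,r}(f)⟩_{n,k+j,r} ≤ C · s^j · ⟨f⟩_{n,k,r} and ⟨(T_{s,r} − id)(f)⟩_{n,k,r} ≤ C · s^{-j} · ⟨f⟩_{n,k+j,r}. -/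

import Mathlib

open Metric Set

/-- Membership in `C^∞₀(B̄_r)`: smooth on the closed ball and flat at the origin. -/
def FlatSmoothOnBall (m : ℕ) (r : ℝ) (f : EuclideanSpace ℝ (Fin m) → ℝ) : Prop :=
  ContDiffOn ℝ (⊤ : ℕ∞) f (closedBall 0 r) ∧
    ∀ i : ℕ, iteratedFDerivWithin ℝ i f (closedBall 0 r) 0 = 0

/-- The weighted norm `⟨f⟩_{n,k,r}` on flat functions on the closed ball. -/
noncomputable def flatNorm (m : ℕ) (r : ℝ) (n k : ℕ)
    (f : EuclideanSpace ℝ (Fin m) → ℝ) : ℝ :=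
  ⨆ p : (closedBall (0 : EuclideanSpace ℝ (Fin m)) r \ {0} :
      Set (EuclideanSpace ℝ (Fin m))) × Fin (n + 1),
    ‖(p.1 : EuclideanSpace ℝ (Fin m))‖ ^ (-(k : ℤ)) *
      ‖iteratedFDerivWithin ℝ p.2 f (closedBall 0 r) p.1‖

set_option maxHeartbeats 1000000

section Auxiliary

variable {m : ℕ} {r : ℝ} {f : EuclideanSpace ℝ (Fin m) → ℝ} {χ : ℝ → ℝ}
  {ψ : EuclideanSpace ℝ (Fin m) → ℝ}

lemma wso_uds (hr : 0 < r) : UniqueDiffOn ℝ (closedBall (0 : EuclideanSpace ℝ (Fin m)) r) :=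
  uniqueDiffOn_convex (convex_closedBall _ _)
    (by rw [interior_closedBall _ (ne_of_gt hr)]; exact nonempty_ball.2 hr)

lemma wso_chain (hr : 0 < r) (hf : ContDiffOn ℝ (⊤ : ℕ∞) f (closedBall 0 r))
    (hflat : ∀ i, iteratedFDerivWithin ℝ i f (closedBall 0 r) 0 = 0) :
    ∀ (l : ℕ) {i : ℕ} {D : ℝ} {x : EuclideanSpace ℝ (Fin m)},
      x ∈ closedBall (0 : EuclideanSpace ℝ (Fin m)) r →
      (∀ y ∈ closedBall (0 : EuclideanSpace ℝ (Fin m)) r, ‖y‖ ≤ ‖x‖ →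
        ‖iteratedFDerivWithin ℝ (i + l) f (closedBall 0 r) y‖ ≤ D) →
      ‖iteratedFDerivWithin ℝ i f (closedBall 0 r) x‖ ≤ D * ‖x‖ ^ l := by
  intro l
  induction l with
  | zero => intro i D x hx hb; simpa using hb x hx le_rfl
  | succ l IH =>
    intro i D x hx hb
    have hD0 : 0 ≤ D := by
      have := hb 0 (mem_closedBall_self hr.le) (by simp)
      rw [hflat] at this; simpa using this
    rcases eq_or_ne x 0 with rfl | hx0
    · rw [hflat i]; simp
    · have hxr : ‖x‖ ≤ r := by simpa [mem_closedBall, dist_zero_right] using hx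
      have hnx : 0 < ‖x‖ := norm_pos_iff.mpr hx0
      have hSB : closedBall (0 : EuclideanSpace ℝ (Fin m)) ‖x‖ ⊆ closedBall 0 r :=
        closedBall_subset_closedBall hxr
      have hudsS : UniqueDiffOn ℝ (closedBall (0 : EuclideanSpace ℝ (Fin m)) ‖x‖) := wso_uds hnx
      have hdiffB : DifferentiableOn ℝ
          (iteratedFDerivWithin ℝ i f (closedBall 0 r)) (closedBall 0 r) :=
        hf.differentiableOn_iteratedFDerivWithin
          (by norm_cast; exact WithTop.coe_lt_top i) (wso_uds hr)
      have hbound : ∀ y ∈ closedBall (0 : EuclideanSpace ℝ (Fin m)) ‖x‖, ‖fderivWithin ℝ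
          (iteratedFDerivWithin ℝ i f (closedBall 0 r))
          (closedBall (0 : EuclideanSpace ℝ (Fin m)) ‖x‖) y‖ ≤ D * ‖x‖ ^ l := by
        intro y hyS
        have hyB : y ∈ closedBall (0 : EuclideanSpace ℝ (Fin m)) r := hSB hyS
        have hyx : ‖y‖ ≤ ‖x‖ := by simpa [mem_closedBall, dist_zero_right] using hyS
        rw [fderivWithin_subset hSB (hudsS y hyS) (hdiffB y hyB),
          norm_fderivWithin_iteratedFDerivWithin]
        have h1 : ‖iteratedFDerivWithin ℝ (i + 1) f (closedBall 0 r) y‖ ≤ D * ‖y‖ ^ l := by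
          refine IH hyB fun z hz hzy => ?_
          have := hb z hz (hzy.trans hyx)
          rwa [show i + (l + 1) = i + 1 + l by ring] at this
        exact h1.trans (by gcongr)
      have h0S : (0 : EuclideanSpace ℝ (Fin m)) ∈ closedBall (0 : EuclideanSpace ℝ (Fin m)) ‖x‖ :=
        mem_closedBall_self (norm_nonneg x)
      have hxS : x ∈ closedBall (0 : EuclideanSpace ℝ (Fin m)) ‖x‖ := by
        simp [mem_closedBall, dist_zero_right]
      have hmvt := Convex.norm_image_sub_le_of_norm_fderivWithin_le
        (hdiffB.mono hSB) hbound (convex_closedBall _ _) h0S hxS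
      rw [hflat i, sub_zero, sub_zero] at hmvt
      calc ‖iteratedFDerivWithin ℝ i f (closedBall 0 r) x‖ ≤ D * ‖x‖ ^ l * ‖x‖ := hmvt
        _ = D * ‖x‖ ^ (l + 1) := by ring

lemma wso_flatNorm_nonneg {n κ : ℕ} : 0 ≤ flatNorm m r n κ f :=
  Real.iSup_nonneg fun p => by positivity

lemma wso_bdd (hr : 0 < r) (hf : ContDiffOn ℝ (⊤ : ℕ∞) f (closedBall 0 r))
    (hflat : ∀ i, iteratedFDerivWithin ℝ i f (closedBall 0 r) 0 = 0) (n κ : ℕ) :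
    ∃ M : ℝ, ∀ x ∈ closedBall (0 : EuclideanSpace ℝ (Fin m)) r \ {0}, ∀ i ≤ n,
      ‖x‖ ^ (-(κ : ℤ)) * ‖iteratedFDerivWithin ℝ i f (closedBall 0 r) x‖ ≤ M := by
  have hbd : ∀ q : ℕ, ∃ Dq : ℝ, 0 ≤ Dq ∧ ∀ y ∈ closedBall (0 : EuclideanSpace ℝ (Fin m)) r,
      ‖iteratedFDerivWithin ℝ (q + κ) f (closedBall 0 r) y‖ ≤ Dq := by
    intro q
    obtain ⟨D, hD⟩ := (isCompact_closedBall (0 : EuclideanSpace ℝ (Fin m))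
        r).exists_bound_of_continuousOn
      (hf.continuousOn_iteratedFDerivWithin
        (le_of_lt (by norm_cast; exact WithTop.coe_lt_top (q + κ))) (wso_uds hr))
    exact ⟨max D 0, le_max_right _ _, fun y hy => (hD y hy).trans (le_max_left _ _)⟩
  choose Dq hDq0 hDq using hbd
  refine ⟨∑ q ∈ Finset.range (n + 1), Dq q, ?_⟩
  intro x hx i hi
  have hx0 : x ≠ 0 := fun h => hx.2 (by simp [h])
  have hnx : 0 < ‖x‖ := norm_pos_iff.mpr hx0
  have hFx : ‖iteratedFDerivWithin ℝ i f (closedBall 0 r) x‖ ≤ Dq i * ‖x‖ ^ κ :=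
    wso_chain hr hf hflat κ hx.1 fun y hy _ => hDq i y hy
  have h2 : ‖x‖ ^ (-(κ : ℤ)) = (‖x‖ ^ κ)⁻¹ := by rw [zpow_neg, zpow_natCast]
  have hax : (0 : ℝ) < ‖x‖ ^ κ := by positivity
  have step : ‖x‖ ^ (-(κ : ℤ)) * ‖iteratedFDerivWithin ℝ i f (closedBall 0 r) x‖ ≤ Dq i := by
    rw [h2]
    rw [inv_mul_le_iff₀ hax, mul_comm]
    exact hFx
  exact step.trans (Finset.single_le_sum (fun q _ => hDq0 q)
    (Finset.mem_range.mpr (Nat.lt_succ_of_le hi)))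

lemma wso_term_le (hr : 0 < r) (hf : ContDiffOn ℝ (⊤ : ℕ∞) f (closedBall 0 r))
    (hflat : ∀ i, iteratedFDerivWithin ℝ i f (closedBall 0 r) 0 = 0) {n κ i : ℕ} (hi : i ≤ n)
    {x : EuclideanSpace ℝ (Fin m)} (hx : x ∈ closedBall (0 : EuclideanSpace ℝ (Fin m)) r)
    (hx0 : x ≠ 0) :
    ‖iteratedFDerivWithin ℝ i f (closedBall 0 r) x‖ ≤ flatNorm m r n κ f * ‖x‖ ^ κ := by
  obtain ⟨M, hM⟩ := wso_bdd hr hf hflat n κ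
  have hbdd : BddAbove (Set.range fun p : (closedBall (0 : EuclideanSpace ℝ (Fin m)) r \ {0} :
      Set (EuclideanSpace ℝ (Fin m))) × Fin (n + 1) =>
      ‖(p.1 : EuclideanSpace ℝ (Fin m))‖ ^ (-(κ : ℤ)) *
        ‖iteratedFDerivWithin ℝ p.2 f (closedBall 0 r) p.1‖) := by
    refine ⟨M, ?_⟩
    rintro _ ⟨p, rfl⟩
    exact hM p.1 p.1.2 p.2 (Nat.lt_succ_iff.mp p.2.isLt)
  have hmem : x ∈ closedBall (0 : EuclideanSpace ℝ (Fin m)) r \ {0} := ⟨hx, by simpa using hx0⟩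
  have hle := le_ciSup hbdd (⟨⟨x, hmem⟩, ⟨i, Nat.lt_succ_of_le hi⟩⟩ :
    (closedBall (0 : EuclideanSpace ℝ (Fin m)) r \ {0} :
      Set (EuclideanSpace ℝ (Fin m))) × Fin (n + 1))
  have hnx : 0 < ‖x‖ := norm_pos_iff.mpr hx0
  have hax : (0 : ℝ) < ‖x‖ ^ κ := by positivity
  have h2 : ‖x‖ ^ (-(κ : ℤ)) = (‖x‖ ^ κ)⁻¹ := by rw [zpow_neg, zpow_natCast]
  rw [h2, inv_mul_le_iff₀ hax, mul_comm] at hle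
  exact hle

lemma wso_interp (hr : 0 < r) (hf : ContDiffOn ℝ (⊤ : ℕ∞) f (closedBall 0 r))
    (hflat : ∀ i, iteratedFDerivWithin ℝ i f (closedBall 0 r) 0 = 0) {n κ i l : ℕ}
    (hil : i + l ≤ n) {x : EuclideanSpace ℝ (Fin m)}
    (hx : x ∈ closedBall (0 : EuclideanSpace ℝ (Fin m)) r) :
    ‖iteratedFDerivWithin ℝ i f (closedBall 0 r) x‖ ≤
      flatNorm m r n κ f * ‖x‖ ^ κ * ‖x‖ ^ l := by
  refine wso_chain hr hf hflat l hx fun y hy hyx => ?_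
  rcases eq_or_ne y 0 with rfl | hy0
  · rw [hflat]
    simp only [norm_zero]
    exact mul_nonneg wso_flatNorm_nonneg (by positivity)
  · calc ‖iteratedFDerivWithin ℝ (i + l) f (closedBall 0 r) y‖
        ≤ flatNorm m r n κ f * ‖y‖ ^ κ := wso_term_le hr hf hflat hil hy hy0
      _ ≤ flatNorm m r n κ f * ‖x‖ ^ κ := by
          have := wso_flatNorm_nonneg (m := m) (r := r) (f := f) (n := n) (κ := κ)
          gcongr

lemma wso_psi_smooth (hχ : ContDiff ℝ (⊤ : ℕ∞) χ) (hχ0 : ∀ u : ℝ, u ≤ 1 → χ u = 0) :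
    ContDiff ℝ (⊤ : ℕ∞) (fun z : EuclideanSpace ℝ (Fin m) => χ ‖z‖) := by
  rw [contDiff_iff_contDiffAt]
  intro x
  rcases lt_or_ge ‖x‖ 1 with hx | hx
  · have hev : (fun z : EuclideanSpace ℝ (Fin m) => χ ‖z‖) =ᶠ[nhds x] fun _ => 0 := by
      have hopen : IsOpen {z : EuclideanSpace ℝ (Fin m) | ‖z‖ < 1} :=
        isOpen_lt continuous_norm continuous_const
      filter_upwards [hopen.mem_nhds hx] with z hz
      exact hχ0 _ (le_of_lt hz)
    exact (contDiffAt_const (c := (0:ℝ))).congr_of_eventuallyEq hev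
  · have hx0 : x ≠ 0 := by intro h; rw [h, norm_zero] at hx; linarith
    exact hχ.contDiffAt.comp x (contDiffAt_norm ℝ hx0)

lemma wso_within_eq_global (hr : 0 < r) {g : EuclideanSpace ℝ (Fin m) → ℝ}
    (hg : ContDiff ℝ (⊤ : ℕ∞) g) {x : EuclideanSpace ℝ (Fin m)}
    (hx : x ∈ closedBall (0 : EuclideanSpace ℝ (Fin m)) r) (i : ℕ) :
    iteratedFDerivWithin ℝ i g (closedBall 0 r) x = iteratedFDeriv ℝ i g x := by
  have h := (contDiff_iff_ftaylorSeries (n := (⊤ : ℕ∞))).mp hg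
  have h2 := (h.hasFTaylorSeriesUpToOn
      (closedBall (0 : EuclideanSpace ℝ (Fin m)) r)).eq_iteratedFDerivWithin_of_uniqueDiffOn
    (m := i) (by norm_cast; exact le_top) (wso_uds hr) hx
  exact h2.symm

lemma wso_global_bound (hψ : ContDiff ℝ (⊤ : ℕ∞) ψ) (c₀ : ℝ)
    (hconst : ∀ z : EuclideanSpace ℝ (Fin m), 2 < ‖z‖ → ψ z = c₀) (n : ℕ) :
    ∃ K : ℝ, 1 ≤ K ∧ ∀ l ≤ n, ∀ z : EuclideanSpace ℝ (Fin m), ‖iteratedFDeriv ℝ l ψ z‖ ≤ K := by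
  have hb : ∀ l : ℕ, ∃ Kl : ℝ, 0 ≤ Kl ∧ ∀ z : EuclideanSpace ℝ (Fin m),
      ‖iteratedFDeriv ℝ l ψ z‖ ≤ Kl := by
    intro l
    obtain ⟨Dl, hDl⟩ := (isCompact_closedBall (0 : EuclideanSpace ℝ (Fin m))
        2).exists_bound_of_continuousOn
      ((hψ.continuous_iteratedFDeriv
        (le_of_lt (by norm_cast; exact WithTop.coe_lt_top l))).continuousOn)
    refine ⟨max (max Dl ‖c₀‖) 0, le_max_right _ _, fun z => ?_⟩
    rcases le_or_gt ‖z‖ 2 with hz | hz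
    · exact (hDl z (by simpa [mem_closedBall, dist_zero_right] using hz)).trans
        (le_max_of_le_left (le_max_left _ _))
    · have hev : ψ =ᶠ[nhds z] fun _ => c₀ := by
        have hopen : IsOpen {w : EuclideanSpace ℝ (Fin m) | 2 < ‖w‖} :=
          isOpen_lt continuous_const continuous_norm
        filter_upwards [hopen.mem_nhds hz] with w hw
        exact hconst w hw
      have heq : iteratedFDeriv ℝ l ψ z = iteratedFDeriv ℝ l (fun _ => c₀) z := by
        rw [← iteratedFDerivWithin_univ, ← iteratedFDerivWithin_univ]
        exact Filter.EventuallyEq.iteratedFDerivWithin_eq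
          (by simpa [nhdsWithin_univ] using hev) hev.self_of_nhds l
      rw [heq]
      rcases Nat.eq_zero_or_pos l with rfl | hl
      · rw [norm_iteratedFDeriv_zero]
        exact le_max_of_le_left (le_max_right _ _)
      · rw [iteratedFDeriv_const_of_ne (Nat.pos_iff_ne_zero.mp hl)]
        simp
  choose Kl hKl0 hKl using hb
  refine ⟨1 + ∑ l ∈ Finset.range (n + 1), Kl l,
    le_add_of_nonneg_right (Finset.sum_nonneg fun l _ => hKl0 l), fun l hl z => ?_⟩
  have h1 : Kl l ≤ ∑ q ∈ Finset.range (n + 1), Kl q :=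
    Finset.single_le_sum (fun q _ => hKl0 q) (Finset.mem_range.mpr (Nat.lt_succ_of_le hl))
  linarith [hKl l z]

lemma wso_scale (hψ : ContDiff ℝ (⊤ : ℕ∞) ψ) {c : ℝ} (hc : 0 ≤ c) (l : ℕ)
    (x : EuclideanSpace ℝ (Fin m)) :
    ‖iteratedFDeriv ℝ l (fun y => ψ (c • y)) x‖ ≤ ‖iteratedFDeriv ℝ l ψ (c • x)‖ * c ^ l := by
  set L : EuclideanSpace ℝ (Fin m) →L[ℝ] EuclideanSpace ℝ (Fin m) :=
    c • ContinuousLinearMap.id ℝ (EuclideanSpace ℝ (Fin m)) with hLdef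
  have hfun : (fun y : EuclideanSpace ℝ (Fin m) => ψ (c • y)) = ψ ∘ L := by
    funext y; simp [hLdef]
  have hLx : L x = c • x := by simp [hLdef]
  have hL : ‖L‖ ≤ c := by
    refine ContinuousLinearMap.opNorm_le_bound L hc fun y => ?_
    rw [hLdef]
    simp [norm_smul, abs_of_nonneg hc]
  rw [hfun, ContinuousLinearMap.iteratedFDeriv_comp_right L hψ x
    (le_of_lt (by norm_cast; exact WithTop.coe_lt_top l))]
  refine (ContinuousMultilinearMap.norm_compContinuousLinearMap_le _ _).trans ?_
  rw [hLx]
  have : (∏ _i : Fin l, ‖L‖) = ‖L‖ ^ l := by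
    rw [Finset.prod_const, Finset.card_univ, Fintype.card_fin]
  rw [this]
  exact mul_le_mul_of_nonneg_left (pow_le_pow_left₀ (norm_nonneg L) hL l) (norm_nonneg _)

lemma wso_product_bound (hr : 0 < r) (hfsm : ContDiffOn ℝ (⊤ : ℕ∞) f (closedBall 0 r))
    (hflat : ∀ i, iteratedFDerivWithin ℝ i f (closedBall 0 r) 0 = 0)
    {n : ℕ} {K : ℝ} (hK : 1 ≤ K) {g : EuclideanSpace ℝ (Fin m) → ℝ}
    (hg : ContDiff ℝ (⊤ : ℕ∞) g) {c : ℝ} (hc : 0 < c)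
    (hgb : ∀ l ≤ n, ∀ z : EuclideanSpace ℝ (Fin m), ‖iteratedFDeriv ℝ l g z‖ ≤ K * c ^ l)
    {i : ℕ} (hi : i ≤ n) {x : EuclideanSpace ℝ (Fin m)}
    (hxB : x ∈ closedBall (0 : EuclideanSpace ℝ (Fin m)) r)
    (hcx : c * ‖x‖ ≤ 2) (κ : ℕ) :
    ‖iteratedFDerivWithin ℝ i (fun y => g y * f y) (closedBall 0 r) x‖ ≤
      4 ^ n * K * flatNorm m r n κ f * ‖x‖ ^ κ := by
  set B := closedBall (0 : EuclideanSpace ℝ (Fin m)) r with hB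
  set P := flatNorm m r n κ f with hP
  have hP0 : 0 ≤ P := wso_flatNorm_nonneg
  have hleib := norm_iteratedFDerivWithin_mul_le (𝕜 := ℝ)
    (hg.contDiffOn : ContDiffOn ℝ ((⊤:ℕ∞) : WithTop ℕ∞) g B) hfsm (wso_uds hr) hxB
    (le_of_lt (by norm_cast; exact WithTop.coe_lt_top i))
  refine hleib.trans ?_
  have hterm : ∀ l ∈ Finset.range (i + 1),
      (i.choose l : ℝ) * ‖iteratedFDerivWithin ℝ l g B x‖ *
        ‖iteratedFDerivWithin ℝ (i - l) f B x‖ ≤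
      (i.choose l : ℝ) * (K * P * ‖x‖ ^ κ) * 2 ^ n := by
    intro l hl
    have hln : l ≤ n := le_trans (Nat.lt_succ_iff.mp (Finset.mem_range.mp hl)) hi
    have hli : l ≤ i := Nat.lt_succ_iff.mp (Finset.mem_range.mp hl)
    have hg1 : ‖iteratedFDerivWithin ℝ l g B x‖ ≤ K * c ^ l := by
      rw [hB, wso_within_eq_global hr hg hxB l]
      exact hgb l hln x
    have hf1 : ‖iteratedFDerivWithin ℝ (i - l) f B x‖ ≤ P * ‖x‖ ^ κ * ‖x‖ ^ l := by
      rw [hB]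
      exact wso_interp hr hfsm hflat (by omega) hxB
    calc (i.choose l : ℝ) * ‖iteratedFDerivWithin ℝ l g B x‖ *
          ‖iteratedFDerivWithin ℝ (i - l) f B x‖
        ≤ (i.choose l : ℝ) * (K * c ^ l) * (P * ‖x‖ ^ κ * ‖x‖ ^ l) := by gcongr
      _ = (i.choose l : ℝ) * (K * P * ‖x‖ ^ κ) * (c * ‖x‖) ^ l := by rw [mul_pow]; ring
      _ ≤ (i.choose l : ℝ) * (K * P * ‖x‖ ^ κ) * 2 ^ n := by
          have h2 : (c * ‖x‖) ^ l ≤ 2 ^ n :=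
            (pow_le_pow_left₀ (by positivity) hcx l).trans
              (pow_le_pow_right₀ (by norm_num) hln)
          exact mul_le_mul_of_nonneg_left h2 (by positivity)
  refine (Finset.sum_le_sum hterm).trans ?_
  have hsum : ∑ l ∈ Finset.range (i + 1), (i.choose l : ℝ) * (K * P * ‖x‖ ^ κ) * 2 ^ n =
      (2:ℝ) ^ i * (K * P * ‖x‖ ^ κ) * 2 ^ n := by
    rw [← Finset.sum_mul, ← Finset.sum_mul]
    congr 1
    congr 1
    rw [← Nat.cast_sum]
    rw [Nat.sum_range_choose]
    push_cast
    ring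
  rw [hsum]
  have h4 : (2:ℝ) ^ i * 2 ^ n ≤ 4 ^ n := by
    have h5 : (2:ℝ) ^ i ≤ 2 ^ n := pow_le_pow_right₀ one_le_two hi
    calc (2:ℝ) ^ i * 2 ^ n ≤ 2 ^ n * 2 ^ n :=
        mul_le_mul_of_nonneg_right h5 (by positivity)
      _ = 4 ^ n := by rw [← mul_pow]; norm_num
  calc (2:ℝ) ^ i * (K * P * ‖x‖ ^ κ) * 2 ^ n
      = (2 ^ i * 2 ^ n) * (K * P * ‖x‖ ^ κ) := by ring
    _ ≤ 4 ^ n * (K * P * ‖x‖ ^ κ) :=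
        mul_le_mul_of_nonneg_right h4 (by positivity)
    _ = 4 ^ n * K * P * ‖x‖ ^ κ := by ring

end Auxiliary

/-- fix `χ` smooth with `χ ≡ 0` on `(-∞,1]` and `χ ≡ 1` on `[2,∞)`, and
set `(T_{s,r} f)(x) := χ(s|x|/r) f(x)`. Then for all `n, k, j` there are constants
`C(n,k,j,r) > 0`, depending continuously on `r > 0`, with
`⟨T_{s,r} f⟩_{n,k+j,r} ≤ C s^j ⟨f⟩_{n,k,r}` and
`⟨(T_{s,r} − id) f⟩_{n,k,r} ≤ C s^{-j} ⟨f⟩_{n,k+j,r}` for all flat smooth `f` and all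
`s > 0`. -/
theorem weight_smoothing_operators (m : ℕ) (hm : 1 ≤ m)
    (χ : ℝ → ℝ) (hχsmooth : ContDiff ℝ (⊤ : ℕ∞) χ)
    (hχ0 : ∀ u : ℝ, u ≤ 1 → χ u = 0) (hχ1 : ∀ u : ℝ, 2 ≤ u → χ u = 1)
    (n k j : ℕ) :
    ∃ C : ℝ → ℝ, ContinuousOn C (Set.Ioi 0) ∧
      ∀ r : ℝ, 0 < r → 0 < C r ∧
        ∀ f : EuclideanSpace ℝ (Fin m) → ℝ, FlatSmoothOnBall m r f →
          ∀ s : ℝ, 0 < s →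
            flatNorm m r n (k + j) (fun x => χ (s * ‖x‖ / r) * f x) ≤
              C r * s ^ j * flatNorm m r n k f ∧
            flatNorm m r n k (fun x => χ (s * ‖x‖ / r) * f x - f x) ≤
              C r * s ^ (-(j : ℤ)) * flatNorm m r n (k + j) f := by
  set ψ₁ : EuclideanSpace ℝ (Fin m) → ℝ := fun z => χ ‖z‖ with hψ₁def
  set ψ₂ : EuclideanSpace ℝ (Fin m) → ℝ := fun z => χ ‖z‖ - 1 with hψ₂def
  have hψ₁ : ContDiff ℝ (⊤ : ℕ∞) ψ₁ := wso_psi_smooth hχsmooth hχ0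
  have hψ₂ : ContDiff ℝ (⊤ : ℕ∞) ψ₂ := hψ₁.sub contDiff_const
  obtain ⟨K₁, hK₁1, hK₁⟩ := wso_global_bound hψ₁ 1 (fun z hz => hχ1 _ (by linarith)) n
  obtain ⟨K₂, hK₂1, hK₂⟩ := wso_global_bound hψ₂ 0
    (fun z hz => by rw [hψ₂def]; simp [hχ1 _ (by linarith : (2:ℝ) ≤ ‖z‖)]) n
  set K : ℝ := max K₁ K₂ with hKdef
  have hK1 : (1:ℝ) ≤ K := le_trans hK₁1 (le_max_left _ _)
  have hK0 : (0:ℝ) < K := lt_of_lt_of_le one_pos hK1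
  set A : ℝ := 4 ^ n * K * 2 ^ j with hAdef
  have h4n : (1:ℝ) ≤ 4 ^ n := one_le_pow₀ (by norm_num)
  have h2j : (1:ℝ) ≤ 2 ^ j := one_le_pow₀ (by norm_num)
  have hA1 : (1:ℝ) ≤ A := by
    rw [hAdef]
    have h1 : (1:ℝ) ≤ 4 ^ n * K := le_trans hK1 (le_mul_of_one_le_left (by positivity) h4n)
    exact le_trans h1 (le_mul_of_one_le_right (by positivity) h2j)
  have hA0 : (0:ℝ) < A := lt_of_lt_of_le one_pos hA1
  refine ⟨fun ρ => A * ((ρ ^ j)⁻¹ + ρ ^ j), ?_, ?_⟩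
  · refine continuousOn_const.mul (ContinuousOn.add ?_ (continuous_pow j).continuousOn)
    exact ContinuousOn.inv₀ (continuous_pow j).continuousOn
      fun ρ hρ => pow_ne_zero j (ne_of_gt (mem_Ioi.mp hρ))
  · intro r hr
    have hrj : (0:ℝ) < r ^ j := by positivity
    have hCr : (0:ℝ) < A * ((r ^ j)⁻¹ + r ^ j) := by positivity
    refine ⟨hCr, ?_⟩
    intro f hf s hs
    obtain ⟨hfsm, hflat⟩ := hf
    set c : ℝ := s / r with hc_def
    have hc : 0 < c := div_pos hs hr
    have hψval₁ : ∀ y : EuclideanSpace ℝ (Fin m), ψ₁ (c • y) = χ (c * ‖y‖) := fun y => by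
      rw [hψ₁def]; simp [norm_smul, abs_of_pos hc]
    have hψval₂ : ∀ y : EuclideanSpace ℝ (Fin m), ψ₂ (c • y) = χ (c * ‖y‖) - 1 := fun y => by
      rw [hψ₂def]; simp [norm_smul, abs_of_pos hc]
    have harg : ∀ y : EuclideanSpace ℝ (Fin m), s * ‖y‖ / r = c * ‖y‖ := fun y => by
      rw [hc_def]; ring
    have hfun1 : (fun x => χ (s * ‖x‖ / r) * f x) =
        fun y => ψ₁ (c • y) * f y := funext fun y => by rw [harg, hψval₁]
    have hfun2 : (fun x => χ (s * ‖x‖ / r) * f x - f x) =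
        fun y => ψ₂ (c • y) * f y := funext fun y => by rw [harg, hψval₂]; ring
    have hg₁ : ContDiff ℝ (⊤ : ℕ∞) (fun y : EuclideanSpace ℝ (Fin m) => ψ₁ (c • y)) :=
      hψ₁.comp (contDiff_const_smul c)
    have hg₂ : ContDiff ℝ (⊤ : ℕ∞) (fun y : EuclideanSpace ℝ (Fin m) => ψ₂ (c • y)) :=
      hψ₂.comp (contDiff_const_smul c)
    have hgb₁ : ∀ l ≤ n, ∀ z : EuclideanSpace ℝ (Fin m),
        ‖iteratedFDeriv ℝ l (fun y => ψ₁ (c • y)) z‖ ≤ K * c ^ l := fun l hl z =>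
      (wso_scale hψ₁ hc.le l z).trans (mul_le_mul_of_nonneg_right
        ((hK₁ l hl (c • z)).trans (le_max_left _ _)) (by positivity))
    have hgb₂ : ∀ l ≤ n, ∀ z : EuclideanSpace ℝ (Fin m),
        ‖iteratedFDeriv ℝ l (fun y => ψ₂ (c • y)) z‖ ≤ K * c ^ l := fun l hl z =>
      (wso_scale hψ₂ hc.le l z).trans (mul_le_mul_of_nonneg_right
        ((hK₂ l hl (c • z)).trans (le_max_right _ _)) (by positivity))
    have hP0 : 0 ≤ flatNorm m r n k f := wso_flatNorm_nonneg
    have hP0' : 0 ≤ flatNorm m r n (k + j) f := wso_flatNorm_nonneg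
    have hsj : (0:ℝ) < s ^ j := by positivity
    constructor
    · -- first inequality
      rw [hfun1]
      refine Real.iSup_le ?_ (by positivity)
      intro p
      set x : EuclideanSpace ℝ (Fin m) := (p.1 : EuclideanSpace ℝ (Fin m)) with hxdef
      set i : ℕ := (p.2 : ℕ) with hidef
      have hxB : x ∈ closedBall (0 : EuclideanSpace ℝ (Fin m)) r := p.1.2.1
      have hx0 : x ≠ 0 := fun h => p.1.2.2 (by rw [hxdef] at h; simp [h])
      have hnx : 0 < ‖x‖ := norm_pos_iff.mpr hx0
      have hi : i ≤ n := Nat.lt_succ_iff.mp p.2.isLt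
      have hw : ‖x‖ ^ (-((k + j : ℕ) : ℤ)) = (‖x‖ ^ (k + j))⁻¹ := by
        rw [zpow_neg, zpow_natCast]
      rcases lt_or_ge ‖x‖ (r / s) with hlt | hge
      · -- T f vanishes near x
        have hopen : IsOpen {y : EuclideanSpace ℝ (Fin m) | ‖y‖ < r / s} :=
          isOpen_lt continuous_norm continuous_const
        have hsmall : ∀ y : EuclideanSpace ℝ (Fin m), ‖y‖ < r / s → ψ₁ (c • y) * f y = 0 := by
          intro y hy
          have h1 : c * ‖y‖ < 1 := by
            calc c * ‖y‖ < c * (r / s) := mul_lt_mul_of_pos_left hy hc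
              _ = 1 := by rw [hc_def]; field_simp
          rw [hψval₁, hχ0 _ h1.le, zero_mul]
        have hev : (fun y => ψ₁ (c • y) * f y) =ᶠ[nhdsWithin x (closedBall 0 r)]
            (fun _ => (0:ℝ)) := by
          refine Filter.Eventually.filter_mono nhdsWithin_le_nhds ?_
          filter_upwards [hopen.mem_nhds hlt] with y hy
          exact hsmall y hy
        have h0 : iteratedFDerivWithin ℝ i (fun y => ψ₁ (c • y) * f y) (closedBall 0 r) x
            = 0 := by
          rw [hev.iteratedFDerivWithin_eq (hsmall x hlt) i]
          rw [iteratedFDerivWithin_zero_fun]; rfl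
        rw [h0]
        simp only [norm_zero, mul_zero]
        exact mul_nonneg (by positivity) hP0
      · -- main region
        have hwk : ‖x‖ ^ k * (‖x‖ ^ (k + j))⁻¹ ≤ s ^ j * (r ^ j)⁻¹ := by
          have h1 : ‖x‖ ^ k * (‖x‖ ^ (k + j))⁻¹ = (‖x‖ ^ j)⁻¹ := by
            rw [pow_add]
            field_simp
          rw [h1]
          have h2 : r / s ≤ ‖x‖ := hge
          have h3 : (0:ℝ) < r / s := div_pos hr hs
          have h4 : (r / s) ^ j ≤ ‖x‖ ^ j := pow_le_pow_left₀ h3.le h2 j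
          have h5 : (0:ℝ) < (r / s) ^ j := by positivity
          have h6 : (‖x‖ ^ j)⁻¹ ≤ ((r / s) ^ j)⁻¹ := by
            exact inv_anti₀ h5 h4
          refine h6.trans (le_of_eq ?_)
          rw [div_pow]
          rw [inv_div]
          rw [div_eq_mul_inv]
        suffices hbd : ‖iteratedFDerivWithin ℝ i (fun y => ψ₁ (c • y) * f y)
            (closedBall 0 r) x‖ ≤ 4 ^ n * K * flatNorm m r n k f * ‖x‖ ^ k by
          have hstep1 : ‖x‖ ^ (-((k + j : ℕ) : ℤ)) *
              ‖iteratedFDerivWithin ℝ i (fun y => ψ₁ (c • y) * f y) (closedBall 0 r) x‖ ≤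
              4 ^ n * K * flatNorm m r n k f * (‖x‖ ^ k * (‖x‖ ^ (k + j))⁻¹) := by
            rw [hw]
            calc (‖x‖ ^ (k + j))⁻¹ *
                ‖iteratedFDerivWithin ℝ i (fun y => ψ₁ (c • y) * f y) (closedBall 0 r) x‖
                ≤ (‖x‖ ^ (k + j))⁻¹ * (4 ^ n * K * flatNorm m r n k f * ‖x‖ ^ k) :=
                  mul_le_mul_of_nonneg_left hbd (by positivity)
              _ = 4 ^ n * K * flatNorm m r n k f * (‖x‖ ^ k * (‖x‖ ^ (k + j))⁻¹) := by ring
          have hstep2 : 4 ^ n * K * flatNorm m r n k f * (‖x‖ ^ k * (‖x‖ ^ (k + j))⁻¹) ≤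
              4 ^ n * K * flatNorm m r n k f * (s ^ j * (r ^ j)⁻¹) :=
            mul_le_mul_of_nonneg_left hwk (mul_nonneg (by positivity) hP0)
          refine (hstep1.trans hstep2).trans ?_
          have hAr : 4 ^ n * K * (r ^ j)⁻¹ ≤ A * ((r ^ j)⁻¹ + r ^ j) := by
            rw [hAdef]
            have hb : (0:ℝ) < 4 ^ n * K := by positivity
            have hir : (0:ℝ) < (r ^ j)⁻¹ := by positivity
            nlinarith [mul_pos hb hir, mul_pos hb hrj]
          calc 4 ^ n * K * flatNorm m r n k f * (s ^ j * (r ^ j)⁻¹)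
              = (4 ^ n * K * (r ^ j)⁻¹) * (s ^ j * flatNorm m r n k f) := by ring
            _ ≤ (A * ((r ^ j)⁻¹ + r ^ j)) * (s ^ j * flatNorm m r n k f) :=
                mul_le_mul_of_nonneg_right hAr (mul_nonneg hsj.le hP0)
            _ = A * ((r ^ j)⁻¹ + r ^ j) * s ^ j * flatNorm m r n k f := by ring
        rcases le_or_gt ‖x‖ (2 * r / s) with hle2 | hgt2
        · have hcx : c * ‖x‖ ≤ 2 := by
            calc c * ‖x‖ ≤ c * (2 * r / s) := mul_le_mul_of_nonneg_left hle2 hc.le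
              _ = 2 := by rw [hc_def]; field_simp
          exact wso_product_bound hr hfsm hflat hK1 hg₁ hc hgb₁ hi hxB hcx k
        · have hopen : IsOpen {y : EuclideanSpace ℝ (Fin m) | 2 * r / s < ‖y‖} :=
            isOpen_lt continuous_const continuous_norm
          have hbig : ∀ y : EuclideanSpace ℝ (Fin m), 2 * r / s < ‖y‖ →
              ψ₁ (c • y) * f y = f y := by
            intro y hy
            have h1 : (2:ℝ) < c * ‖y‖ := by
              calc (2:ℝ) = c * (2 * r / s) := by rw [hc_def]; field_simp
                _ < c * ‖y‖ := mul_lt_mul_of_pos_left hy hc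
            rw [hψval₁, hχ1 _ h1.le, one_mul]
          have hev : (fun y => ψ₁ (c • y) * f y) =ᶠ[nhdsWithin x (closedBall 0 r)] f := by
            refine Filter.Eventually.filter_mono nhdsWithin_le_nhds ?_
            filter_upwards [hopen.mem_nhds hgt2] with y hy
            exact hbig y hy
          rw [hev.iteratedFDerivWithin_eq (hbig x hgt2) i]
          have h1 : ‖iteratedFDerivWithin ℝ i f (closedBall 0 r) x‖ ≤
              flatNorm m r n k f * ‖x‖ ^ k := wso_term_le hr hfsm hflat hi hxB hx0
          refine h1.trans ?_
          calc flatNorm m r n k f * ‖x‖ ^ k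
              = 1 * (flatNorm m r n k f * ‖x‖ ^ k) := by ring
            _ ≤ (4 ^ n * K) * (flatNorm m r n k f * ‖x‖ ^ k) := by
                refine mul_le_mul_of_nonneg_right ?_ (mul_nonneg hP0 (by positivity))
                exact le_trans hK1 (le_mul_of_one_le_left (by positivity) h4n)
            _ = 4 ^ n * K * flatNorm m r n k f * ‖x‖ ^ k := by ring
    · -- second inequality
      rw [hfun2]
      have hszj : (0:ℝ) ≤ s ^ (-(j : ℤ)) := zpow_nonneg hs.le _
      refine Real.iSup_le ?_ (mul_nonneg (mul_nonneg hCr.le hszj) hP0')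
      intro p
      set x : EuclideanSpace ℝ (Fin m) := (p.1 : EuclideanSpace ℝ (Fin m)) with hxdef
      set i : ℕ := (p.2 : ℕ) with hidef
      have hxB : x ∈ closedBall (0 : EuclideanSpace ℝ (Fin m)) r := p.1.2.1
      have hx0 : x ≠ 0 := fun h => p.1.2.2 (by rw [hxdef] at h; simp [h])
      have hnx : 0 < ‖x‖ := norm_pos_iff.mpr hx0
      have hi : i ≤ n := Nat.lt_succ_iff.mp p.2.isLt
      have hszj' : s ^ (-(j : ℤ)) = (s ^ j)⁻¹ := by rw [zpow_neg, zpow_natCast]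
      rcases le_or_gt ‖x‖ (2 * r / s) with hle2 | hgt2
      · have hcx : c * ‖x‖ ≤ 2 := by
          calc c * ‖x‖ ≤ c * (2 * r / s) := mul_le_mul_of_nonneg_left hle2 hc.le
            _ = 2 := by rw [hc_def]; field_simp
        have hbd := wso_product_bound hr hfsm hflat hK1 hg₂ hc hgb₂ hi hxB hcx (k + j)
        have hw : ‖x‖ ^ (-(k : ℤ)) = (‖x‖ ^ k)⁻¹ := by rw [zpow_neg, zpow_natCast]
        have hxj : ‖x‖ ^ (k + j) * (‖x‖ ^ k)⁻¹ = ‖x‖ ^ j := by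
          rw [pow_add]; field_simp
        have hstep1 : ‖x‖ ^ (-(k : ℤ)) *
            ‖iteratedFDerivWithin ℝ i (fun y => ψ₂ (c • y) * f y) (closedBall 0 r) x‖ ≤
            4 ^ n * K * flatNorm m r n (k + j) f * ‖x‖ ^ j := by
          rw [hw]
          calc (‖x‖ ^ k)⁻¹ *
              ‖iteratedFDerivWithin ℝ i (fun y => ψ₂ (c • y) * f y) (closedBall 0 r) x‖
              ≤ (‖x‖ ^ k)⁻¹ * (4 ^ n * K * flatNorm m r n (k + j) f * ‖x‖ ^ (k + j)) :=
                mul_le_mul_of_nonneg_left hbd (by positivity)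
            _ = 4 ^ n * K * flatNorm m r n (k + j) f * (‖x‖ ^ (k + j) * (‖x‖ ^ k)⁻¹) := by
                ring
            _ = 4 ^ n * K * flatNorm m r n (k + j) f * ‖x‖ ^ j := by rw [hxj]
        refine hstep1.trans ?_
        have hxle : ‖x‖ ^ j ≤ 2 ^ j * r ^ j * (s ^ j)⁻¹ := by
          calc ‖x‖ ^ j ≤ (2 * r / s) ^ j := pow_le_pow_left₀ (norm_nonneg x) hle2 j
            _ = 2 ^ j * r ^ j * (s ^ j)⁻¹ := by
                rw [div_pow, mul_pow, div_eq_mul_inv]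
        have hstep2 : 4 ^ n * K * flatNorm m r n (k + j) f * ‖x‖ ^ j ≤
            4 ^ n * K * flatNorm m r n (k + j) f * (2 ^ j * r ^ j * (s ^ j)⁻¹) :=
          mul_le_mul_of_nonneg_left hxle (mul_nonneg (by positivity) hP0')
        refine hstep2.trans ?_
        rw [hszj']
        have hfin : 4 ^ n * K * flatNorm m r n (k + j) f * (2 ^ j * r ^ j * (s ^ j)⁻¹)
            = (A * r ^ j) * ((s ^ j)⁻¹ * flatNorm m r n (k + j) f) := by
          rw [hAdef]; ring
        rw [hfin]
        have hAr2 : A * r ^ j ≤ A * ((r ^ j)⁻¹ + r ^ j) := by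
          have : (0:ℝ) < (r ^ j)⁻¹ := by positivity
          nlinarith
        calc (A * r ^ j) * ((s ^ j)⁻¹ * flatNorm m r n (k + j) f)
            ≤ (A * ((r ^ j)⁻¹ + r ^ j)) * ((s ^ j)⁻¹ * flatNorm m r n (k + j) f) :=
              mul_le_mul_of_nonneg_right hAr2 (mul_nonneg (by positivity) hP0')
          _ = A * ((r ^ j)⁻¹ + r ^ j) * (s ^ j)⁻¹ * flatNorm m r n (k + j) f := by ring
      · have hopen : IsOpen {y : EuclideanSpace ℝ (Fin m) | 2 * r / s < ‖y‖} :=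
          isOpen_lt continuous_const continuous_norm
        have hbig : ∀ y : EuclideanSpace ℝ (Fin m), 2 * r / s < ‖y‖ →
            ψ₂ (c • y) * f y = 0 := by
          intro y hy
          have h1 : (2:ℝ) < c * ‖y‖ := by
            calc (2:ℝ) = c * (2 * r / s) := by rw [hc_def]; field_simp
              _ < c * ‖y‖ := mul_lt_mul_of_pos_left hy hc
          rw [hψval₂, hχ1 _ h1.le]
          ring
        have hev : (fun y => ψ₂ (c • y) * f y) =ᶠ[nhdsWithin x (closedBall 0 r)]
            (fun _ => (0:ℝ)) := by
          refine Filter.Eventually.filter_mono nhdsWithin_le_nhds ?_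
          filter_upwards [hopen.mem_nhds hgt2] with y hy
          exact hbig y hy
        have h0 : iteratedFDerivWithin ℝ i (fun y => ψ₂ (c • y) * f y) (closedBall 0 r) x
            = 0 := by
          rw [hev.iteratedFDerivWithin_eq (hbig x hgt2) i]
          rw [iteratedFDerivWithin_zero_fun]; rfl
        rw [h0]
        simp only [norm_zero, mul_zero]
        exact mul_nonneg (mul_nonneg hCr.le hszj) hP0'
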